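/- Identification with Bachmann's ordered-Young-tableaux Schur functions (equation (40)): let m = n and let R′ be the marked alphabet on {1,…,2n} with N = {1,3,5,…,2n−1} primed and M = {2,4,…,2n} unprimed (so the k-th unprimed letter is 2k and the k-th primed letter is 2k−1). Given a family F = (f_{k,c})_{1≤k≤n, c∈ℤ} and an element t in a commutative ring, set x_{k,c} = (1−t) f_{k,c} and y_{k,c} = t f_{k,c}. Then for all partitions μ ⊆ λ, s^{R′}_{λ/μ}(X,Y) = s^{Bac}_{λ/μ}(F;t). -/

import Mathlib

namespace SuperSchur

variable {A : Type*} [CommRing A]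

/-- The content of a box `(i, j)` (rows and columns indexed from 0;
row `i` occupies columns `μ_i ≤ j < λ_i`, so the content is `j - i`). -/
def content (p : ℕ × ℕ) : ℤ := (p.2 : ℤ) - (p.1 : ℤ)

/-- The cells of the skew Young diagram `F^{λ/μ}` (0-indexed rows and columns). -/
def cells (lam mu : List ℕ) : Finset (ℕ × ℕ) :=
  (Finset.range lam.length).biUnion fun i =>
    (Finset.Ico (mu.getD i 0) (lam.getD i 0)).image fun j => (i, j)

/-- `l` is a partition: a weakly decreasing list of positive integers. -/
def IsPartition (l : List ℕ) : Prop := l.Pairwise (· ≥ ·) ∧ ∀ x ∈ l, 0 < x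

/-- `μ ⊆ λ`. -/
def Contained (mu lam : List ℕ) : Prop := ∀ i, mu.getD i 0 ≤ lam.getD i 0

/-- `T` is a skew supertableau on the cell set `C` over the marked alphabet `Fin NA`
(letters in their natural order), where `prm r = true` means the letter `r` is primed:
entries weakly increase along rows and down columns, no two equal unprimed entries lie
in the same column, and no two equal primed entries lie in the same row. -/
def IsSuperTab {NA : ℕ} (C : Finset (ℕ × ℕ)) (prm : Fin NA → Bool)
    (T : {p // p ∈ C} → Fin NA) : Prop :=
  (∀ u v : {p // p ∈ C}, u.1.1 = v.1.1 → u.1.2 ≤ v.1.2 → T u ≤ T v) ∧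
  (∀ u v : {p // p ∈ C}, u.1.2 = v.1.2 → u.1.1 ≤ v.1.1 → T u ≤ T v) ∧
  (∀ u v : {p // p ∈ C}, u.1.2 = v.1.2 → u.1.1 ≠ v.1.1 → prm (T u) = false → T u ≠ T v) ∧
  (∀ u v : {p // p ∈ C}, u.1.1 = v.1.1 → u.1.2 ≠ v.1.2 → prm (T u) = true → T u ≠ T v)

open Classical in
/-- Generic weighted sum over all skew supertableaux on `C`: the weight of the letter `r`
placed in a box of content `c` is `w r c`. -/
noncomputable def tabSum {NA : ℕ} (C : Finset (ℕ × ℕ)) (prm : Fin NA → Bool)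
    (w : Fin NA → ℤ → A) : A :=
  ∑ T ∈ Finset.univ.filter (fun T : {p // p ∈ C} → Fin NA => IsSuperTab C prm T),
    ∏ u : {p // p ∈ C}, w (T u) (content u.1)

/-- The (1-based) index of the letter `r` among the letters with the same marking:
if `r` is the k-th smallest unprimed letter then `idx prm r = k`, and similarly
for primed letters. -/
def idx {NA : ℕ} (prm : Fin NA → Bool) (r : Fin NA) : ℕ :=
  (Finset.univ.filter fun r' => prm r' = prm r ∧ r' ≤ r).card

/-- `σ(r) = #{i ∈ M : i ≤ r} - #{j ∈ N : j ≤ r}`, plus `1` if `r` is primed. -/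
def sigma {NA : ℕ} (prm : Fin NA → Bool) (r : Fin NA) : ℤ :=
  ((Finset.univ.filter fun r' : Fin NA => prm r' = false ∧ r' ≤ r).card : ℤ)
    - ((Finset.univ.filter fun r' : Fin NA => prm r' = true ∧ r' ≤ r).card : ℤ)
    + (if prm r then 1 else 0)

/-- Ninth-variation weights: the k-th unprimed letter in a box of content `c`
carries weight `X k c`, and the ℓ-th primed letter carries `Y ℓ c`. -/
def wNinth {m n NA : ℕ} (prm : Fin NA → Bool) (X : Fin m → ℤ → A) (Y : Fin n → ℤ → A) :
    Fin NA → ℤ → A := fun r c =>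
  if prm r then (if h : idx prm r - 1 < n then Y ⟨idx prm r - 1, h⟩ c else 0)
  else (if h : idx prm r - 1 < m then X ⟨idx prm r - 1, h⟩ c else 0)

/-- Factorial supersymmetric weights: the k-th unprimed letter `r` in a box of content `c`
carries weight `x k + a (σ(r) + c)`, and the ℓ-th primed letter `r` carries
`y ℓ - a (σ(r) + c)`. -/
def wFact {m n NA : ℕ} (prm : Fin NA → Bool) (x : Fin m → A) (y : Fin n → A) (a : ℤ → A) :
    Fin NA → ℤ → A := fun r c =>
  if prm r then
    (if h : idx prm r - 1 < n then y ⟨idx prm r - 1, h⟩ else 0) - a (sigma prm r + c)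
  else
    (if h : idx prm r - 1 < m then x ⟨idx prm r - 1, h⟩ else 0) + a (sigma prm r + c)

/-- The marked alphabet `1 < 2 < ⋯ < m < 1′ < 2′ < ⋯ < n′`. -/
def prmFirst (m n : ℕ) : Fin (m + n) → Bool := fun r => decide (m ≤ (r : ℕ))

/-- The classical (first variation) supersymmetric skew Schur function `s_{λ/μ}(x,y)`. -/
noncomputable def superSchur (lam mu : List ℕ) {m n : ℕ} (x : Fin m → A) (y : Fin n → A) : A :=
  tabSum (cells lam mu) (prmFirst m n) (wNinth (prmFirst m n) (fun k _ => x k) (fun l _ => y l))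

/-- The row (counted from the top, 0-based) of the box of content `c` in the canonical
realisation of the segment of the cutting strip ending at content `d`:
the number of vertical steps strictly between `c` and `d`. -/
noncomputable def ribRow (dir : ℤ → Bool) (d c : ℤ) : ℕ :=
  ((Finset.Ioc c d).filter fun c' => dir c' = true).card

/-- The shift `m(p,q)`: the content (within the cutting strip) of the box of the ribbon
`φ_{ad}` that lies on the main diagonal of the skew diagram whose outer rim is `φ_{ad}`. -/
noncomputable def mShift (dir : ℤ → Bool) (a d : ℤ) : ℤ := a + (ribRow dir d a : ℤ)

/-- The ribbon `φ_{ad}` of the cutting strip, realised canonically as a skew diagram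
in its own right (its box of cutting-strip content `c` gets standard content
`c - mShift dir a d`). -/
noncomputable def ribbonCells (dir : ℤ → Bool) (a d : ℤ) : Finset (ℕ × ℕ) :=
  (Finset.Icc a d).image fun c =>
    (ribRow dir d c, (c + (ribRow dir d c : ℤ) - mShift dir a d).toNat)

/-- The cell set `S` coincides in shape and contents with the segment `φ_{ab}` of the
cutting strip described by `dir` (where `dir c = true` iff the box of content `c - 1`
lies below the box of content `c`, and `dir c = false` iff it lies to its left). -/
def StripMatches (dir : ℤ → Bool) (a b : ℤ) (S : Finset (ℕ × ℕ)) : Prop :=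
  (∀ c : ℤ, (a ≤ c ∧ c ≤ b) ↔ ∃ u ∈ S, content u = c) ∧
  (∀ u ∈ S, ∀ v ∈ S, content u = content v → u = v) ∧
  (∀ u ∈ S, ∀ v ∈ S, content v = content u + 1 →
    if dir (content v) then v.1 + 1 = u.1 ∧ v.2 = u.2 else v.1 = u.1 ∧ u.2 + 1 = v.2)

/-- `(dir, ab, θ)` is an outside decomposition of `F^{λ/μ}`: the strips `θ p` are
pairwise disjoint with union the whole diagram, each `θ p` coincides in shape
and contents with the segment `φ_{(ab p).1, (ab p).2}` of the common cutting strip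
described by `dir`, the starting box of each strip lies on the left or bottom boundary,
the ending box of each strip lies on the right or top boundary, and the cutting strip
contains a box of every relevant content occurring in the diagram. -/
def OutsideDecomp (lam mu : List ℕ) {s : ℕ} (dir : ℤ → Bool)
    (ab : Fin s → ℤ × ℤ) (θ : Fin s → Finset (ℕ × ℕ)) : Prop :=
  (∀ p q : Fin s, p ≠ q → Disjoint (θ p) (θ q)) ∧
  (Finset.univ.biUnion θ = cells lam mu) ∧
  (∀ p : Fin s, StripMatches dir (ab p).1 (ab p).2 (θ p)) ∧
  (∀ p : Fin s, ∀ u ∈ θ p, content u = (ab p).1 →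
    u.2 = 0 ∨ (u.1, u.2 - 1) ∉ cells lam mu ∨ (u.1 + 1, u.2) ∉ cells lam mu) ∧
  (∀ p : Fin s, ∀ u ∈ θ p, content u = (ab p).2 →
    (u.1, u.2 + 1) ∉ cells lam mu ∨ u.1 = 0 ∨ (u.1 - 1, u.2) ∉ cells lam mu) ∧
  (∀ p q : Fin s, ∀ c : ℤ, (ab p).1 ≤ c → c ≤ (ab q).2 → ∃ u ∈ cells lam mu, content u = c)

/-- Two boxes are edgewise adjacent. -/
def CellAdj (u v : ℕ × ℕ) : Prop :=
  (u.1 = v.1 ∧ (u.2 + 1 = v.2 ∨ v.2 + 1 = u.2)) ∨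
  (u.2 = v.2 ∧ (u.1 + 1 = v.1 ∨ v.1 + 1 = u.1))

/-- `C` is edgewise connected. -/
def ConnectedCells (C : Finset (ℕ × ℕ)) : Prop :=
  ∀ u ∈ C, ∀ v ∈ C,
    Relation.ReflTransGen (fun p q => p ∈ C ∧ q ∈ C ∧ CellAdj p q) u v

/-- `C` contains no 2×2 block of boxes. -/
def NoTwoByTwo (C : Finset (ℕ × ℕ)) : Prop :=
  ∀ i j : ℕ, ¬((i, j) ∈ C ∧ (i + 1, j) ∈ C ∧ (i, j + 1) ∈ C ∧ (i + 1, j + 1) ∈ C)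

/-- `C` is a ribbon: nonempty, edgewise connected, with no 2×2 block of boxes. -/
def IsRibbon (C : Finset (ℕ × ℕ)) : Prop :=
  C.Nonempty ∧ ConnectedCells C ∧ NoTwoByTwo C

/-- `T` is an ordered Young tableau on `C`: entries weakly increase along rows and
down columns, and strictly increase down diagonals. -/
def IsOYT {nL : ℕ} (C : Finset (ℕ × ℕ)) (T : {p // p ∈ C} → Fin nL) : Prop :=
  (∀ u v : {p // p ∈ C}, u.1.1 = v.1.1 → u.1.2 ≤ v.1.2 → T u ≤ T v) ∧
  (∀ u v : {p // p ∈ C}, u.1.2 = v.1.2 → u.1.1 ≤ v.1.1 → T u ≤ T v) ∧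
  (∀ u v : {p // p ∈ C}, u.1.1 + 1 = v.1.1 → u.1.2 + 1 = v.1.2 → T u < T v)

/-- The number `h(T)` of horizontally adjacent pairs of equal entries. -/
def horizPairs {nL : ℕ} (C : Finset (ℕ × ℕ)) (T : {p // p ∈ C} → Fin nL) : ℕ :=
  (Finset.univ.filter fun uv : {p // p ∈ C} × {p // p ∈ C} =>
    uv.1.1.1 = uv.2.1.1 ∧ uv.1.1.2 + 1 = uv.2.1.2 ∧ T uv.1 = T uv.2).card

/-- The number `v(T)` of vertically adjacent pairs of equal entries. -/
def vertPairs {nL : ℕ} (C : Finset (ℕ × ℕ)) (T : {p // p ∈ C} → Fin nL) : ℕ :=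
  (Finset.univ.filter fun uv : {p // p ∈ C} × {p // p ∈ C} =>
    uv.1.1.2 = uv.2.1.2 ∧ uv.1.1.1 + 1 = uv.2.1.1 ∧ T uv.1 = T uv.2).card

open Classical in
/-- Bachmann's ordered-Young-tableau Schur function of the cell set `C`. -/
noncomputable def bacSum (C : Finset (ℕ × ℕ)) {nL : ℕ} (F : Fin nL → ℤ → A) (t : A) : A :=
  ∑ T ∈ Finset.univ.filter (fun T : {p // p ∈ C} → Fin nL => IsOYT C T),
    t ^ vertPairs C T * (1 - t) ^ horizPairs C T *
      ∏ u : {p // p ∈ C}, F (T u) (content u.1)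

/-- Molev's factorial supersymmetric weights on the alphabet
`n′ < ⋯ < 2′ < 1′ < 1 < 2 < ⋯ < m` (position `p < n` is the letter `(n-p)′`,
position `n + k - 1` is the letter `k`): the letter `k` in a box of content `c`
carries weight `x k + a (k + c)` and the letter `ℓ′` carries `y ℓ - a (ℓ + c)`. -/
def wMol {m n : ℕ} (x : Fin m → A) (y : Fin n → A) (a : ℤ → A) : Fin (m + n) → ℤ → A :=
  fun r c =>
    if h : (r : ℕ) < n then
      y ⟨n - 1 - (r : ℕ), by omega⟩ - a (((n : ℤ) - ((r : ℕ) : ℤ)) + c)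
    else
      x ⟨(r : ℕ) - n, by have := r.isLt; omega⟩ + a ((((r : ℕ) : ℤ) - (n : ℤ) + 1) + c)



-- ==================== auxiliary lemmas ====================

open Classical

lemma idx_alt {N : ℕ} (r : Fin N) :
    idx (fun r' : Fin N => decide ((r' : ℕ) % 2 = 0)) r = (r : ℕ) / 2 + 1 := by
  unfold idx
  rw [← Finset.card_range ((r : ℕ) / 2 + 1)]
  refine Finset.card_bij (fun a _ => (a : ℕ) / 2) ?_ ?_ ?_
  · intro a ha
    simp only [Finset.mem_filter, Finset.mem_univ, true_and, decide_eq_decide, Fin.le_def] at ha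
    simp only [Finset.mem_range]
    omega
  · intro a₁ h₁ a₂ h₂ h
    simp only [Finset.mem_filter, Finset.mem_univ, true_and, decide_eq_decide, Fin.le_def] at h₁ h₂
    exact Fin.ext (by omega)
  · intro b hb
    simp only [Finset.mem_range] at hb
    have hr := r.isLt
    refine ⟨⟨2 * b + (r : ℕ) % 2, by omega⟩, ?_, ?_⟩
    · simp only [Finset.mem_filter, Finset.mem_univ, true_and, decide_eq_decide, Fin.le_def]
      exact ⟨by omega, by omega⟩
    · dsimp only
      omega

lemma wNinth_alt {n : ℕ} (F : Fin n → ℤ → A) (t : A) (r : Fin (n + n)) (c : ℤ) :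
    wNinth (m := n) (fun r' : Fin (n + n) => decide ((r' : ℕ) % 2 = 0))
      (fun k c => (1 - t) * F k c) (fun k c => t * F k c) r c
    = (if (r : ℕ) % 2 = 0 then t else 1 - t) * F ⟨(r : ℕ) / 2, by have := r.isLt; omega⟩ c := by
  have h2 : (r : ℕ) / 2 < n := by have := r.isLt; omega
  unfold wNinth
  rw [idx_alt]
  simp only [Nat.add_sub_cancel, h2, dif_pos]
  by_cases h : (r : ℕ) % 2 = 0 <;> simp [h]

lemma mem_cells {lam mu : List ℕ} {i j : ℕ} :
    (i, j) ∈ cells lam mu ↔ i < lam.length ∧ mu.getD i 0 ≤ j ∧ j < lam.getD i 0 := by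
  simp only [cells, Finset.mem_biUnion, Finset.mem_range, Finset.mem_image, Finset.mem_Ico,
    Prod.mk.injEq]
  constructor
  · rintro ⟨i', hi', j', hj', rfl, rfl⟩; exact ⟨hi', hj'⟩
  · rintro ⟨hi, hj⟩; exact ⟨i, hi, j, hj, rfl, rfl⟩

lemma getD_anti {l : List ℕ} (h : l.Pairwise (· ≥ ·)) {i k : ℕ} (hik : i ≤ k) :
    l.getD k 0 ≤ l.getD i 0 := by
  rcases lt_or_ge k l.length with hk | hk
  · have hi : i < l.length := lt_of_le_of_lt hik hk
    rw [List.getD_eq_getElem l 0 hk, List.getD_eq_getElem l 0 hi]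
    rcases eq_or_lt_of_le hik with rfl | h'
    · exact le_refl _
    · exact h.rel_get_of_lt (a := ⟨i, hi⟩) (b := ⟨k, hk⟩) h'
  · rw [List.getD_eq_default l 0 hk]
    exact Nat.zero_le _

lemma cells_row {lam mu : List ℕ} {i j j' k : ℕ}
    (h1 : (i, j) ∈ cells lam mu) (h2 : (i, j') ∈ cells lam mu) (hk1 : j ≤ k) (hk2 : k ≤ j') :
    (i, k) ∈ cells lam mu := by
  simp only [mem_cells] at *
  omega

lemma cells_col {lam mu : List ℕ} (hlam : lam.Pairwise (· ≥ ·)) (hmu : mu.Pairwise (· ≥ ·))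
    {i i' j k : ℕ}
    (h1 : (i, j) ∈ cells lam mu) (h2 : (i', j) ∈ cells lam mu) (hk1 : i ≤ k) (hk2 : k ≤ i') :
    (k, j) ∈ cells lam mu := by
  simp only [mem_cells] at *
  refine ⟨by omega, ?_, ?_⟩
  · calc mu.getD k 0 ≤ mu.getD i 0 := getD_anti hmu hk1
    _ ≤ j := h1.2.1
  · calc j < lam.getD i' 0 := h2.2.2
    _ ≤ lam.getD k 0 := getD_anti hlam hk2

lemma cells_square {lam mu : List ℕ} (hlam : lam.Pairwise (· ≥ ·)) (hmu : mu.Pairwise (· ≥ ·))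
    {i j : ℕ} (h1 : (i, j) ∈ cells lam mu) (h2 : (i + 1, j + 1) ∈ cells lam mu) :
    (i, j + 1) ∈ cells lam mu ∧ (i + 1, j) ∈ cells lam mu := by
  simp only [mem_cells] at *
  have hmu' : mu.getD (i + 1) 0 ≤ mu.getD i 0 := getD_anti hmu (by omega)
  have hlam' : lam.getD (i + 1) 0 ≤ lam.getD i 0 := getD_anti hlam (by omega)
  omega


section Key

variable {n : ℕ} {C : Finset (ℕ × ℕ)}

/-- `u` has a left neighbour in `C` with the same entry. -/
def Lcell (S : {p // p ∈ C} → Fin n) (u : {p // p ∈ C}) : Prop :=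
  ∃ w : {p // p ∈ C}, w.1.1 = u.1.1 ∧ w.1.2 + 1 = u.1.2 ∧ S w = S u

/-- `u` has a below neighbour in `C` with the same entry. -/
def Bcell (S : {p // p ∈ C} → Fin n) (u : {p // p ∈ C}) : Prop :=
  ∃ w : {p // p ∈ C}, w.1.2 = u.1.2 ∧ u.1.1 + 1 = w.1.1 ∧ S w = S u

lemma not_L_and_B {S : {p // p ∈ C} → Fin n} (hS : IsOYT C S) (u : {p // p ∈ C}) :
    ¬(Lcell S u ∧ Bcell S u) := by
  rintro ⟨⟨w1, h1r, h1c, h1v⟩, ⟨w2, h2c, h2r, h2v⟩⟩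
  have := hS.2.2 w1 w2 (by omega) (by omega)
  rw [h1v, h2v] at this
  exact lt_irrefl _ this

open Classical in
lemma card_Bcell (S : {p // p ∈ C} → Fin n) :
    (Finset.univ.filter fun u => Bcell S u).card = vertPairs C S := by
  classical
  unfold vertPairs
  symm
  refine Finset.card_bij (fun uv _ => uv.1) ?_ ?_ ?_
  · intro uv huv
    simp only [Finset.mem_filter, Finset.mem_univ, true_and] at huv ⊢
    exact ⟨uv.2, huv.1.symm, huv.2.1, huv.2.2.symm⟩
  · intro p hp q hq h
    simp only [Finset.mem_filter, Finset.mem_univ, true_and] at hp hq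
    have e1 : p.1.1.1 = q.1.1.1 := by rw [h]
    have e2 : p.1.1.2 = q.1.1.2 := by rw [h]
    have : p.2 = q.2 := Subtype.ext (Prod.ext (by omega) (by omega))
    exact Prod.ext h this
  · intro u hu
    simp only [Finset.mem_filter, Finset.mem_univ, true_and] at hu
    obtain ⟨w, hw1, hw2, hw3⟩ := hu
    refine ⟨(u, w), ?_, rfl⟩
    simp only [Finset.mem_filter, Finset.mem_univ, true_and]
    exact ⟨hw1.symm, hw2, hw3.symm⟩

open Classical in
lemma card_Lcell (S : {p // p ∈ C} → Fin n) :
    (Finset.univ.filter fun u => Lcell S u).card = horizPairs C S := by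
  classical
  unfold horizPairs
  symm
  refine Finset.card_bij (fun uv _ => uv.2) ?_ ?_ ?_
  · intro uv huv
    simp only [Finset.mem_filter, Finset.mem_univ, true_and] at huv ⊢
    exact ⟨uv.1, huv.1, huv.2.1, huv.2.2⟩
  · intro p hp q hq h
    simp only [Finset.mem_filter, Finset.mem_univ, true_and] at hp hq
    have e1 : p.2.1.1 = q.2.1.1 := by rw [h]
    have e2 : p.2.1.2 = q.2.1.2 := by rw [h]
    have : p.1 = q.1 := Subtype.ext (Prod.ext (by omega) (by omega))
    exact Prod.ext this h
  · intro u hu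
    simp only [Finset.mem_filter, Finset.mem_univ, true_and] at hu
    obtain ⟨w, hw1, hw2, hw3⟩ := hu
    refine ⟨(w, u), ?_, rfl⟩
    simp only [Finset.mem_filter, Finset.mem_univ, true_and]
    exact ⟨hw1, hw2, hw3⟩

open Classical in
/-- The set of allowed superscripts at a cell, given an OYT. -/
noncomputable def alwSet (S : {p // p ∈ C} → Fin n) (u : {p // p ∈ C}) : Finset Bool :=
  if Bcell S u then {false} else if Lcell S u then {true} else Finset.univ

lemma sum_alwSet (t : A) (S : {p // p ∈ C} → Fin n) (u : {p // p ∈ C}) :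
    (∑ b ∈ alwSet S u, (if b then (1 - t) else t))
      = (if Bcell S u then t else if Lcell S u then (1 - t) else 1) := by
  classical
  unfold alwSet
  split_ifs with h1 h2
  · simp
  · simp
  · rw [Fintype.sum_bool]
    ring_nf
    simp

open Classical in
lemma prod_alwSet {S : {p // p ∈ C} → Fin n} (hS : IsOYT C S) (t : A) :
    (∏ u : {p // p ∈ C}, (if Bcell S u then t else if Lcell S u then (1 - t) else 1))
      = t ^ vertPairs C S * (1 - t) ^ horizPairs C S := by
  classical
  rw [← Finset.prod_filter_mul_prod_filter_not Finset.univ (fun u => Bcell S u)]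
  congr 1
  · rw [Finset.prod_congr rfl (fun u hu => if_pos (Finset.mem_filter.mp hu).2),
      Finset.prod_const, card_Bcell]
  · rw [Finset.prod_congr rfl (fun u hu => if_neg (Finset.mem_filter.mp hu).2),
      ← Finset.prod_filter_mul_prod_filter_not _ (fun u => Lcell S u)]
    have h3 : ((Finset.univ.filter fun u => ¬ Bcell S u).filter fun u => Lcell S u)
        = Finset.univ.filter fun u => Lcell S u := by
      ext u
      simp only [Finset.mem_filter, Finset.mem_univ, true_and]
      exact ⟨fun h => h.2, fun h => ⟨fun hB => not_L_and_B hS u ⟨h, hB⟩, h⟩⟩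
    rw [h3, Finset.prod_congr rfl (fun u hu => if_pos (Finset.mem_filter.mp hu).2),
      Finset.prod_const, card_Lcell,
      Finset.prod_congr rfl (fun u hu => if_neg (Finset.mem_filter.mp hu).2),
      Finset.prod_const_one, mul_one]


lemma supertab_even_of_below {T : {p // p ∈ C} → Fin (n + n)}
    (hT : IsSuperTab C (fun r : Fin (n + n) => decide ((r : ℕ) % 2 = 0)) T)
    {u w : {p // p ∈ C}} (hc : w.1.2 = u.1.2) (hr : u.1.1 + 1 = w.1.1)
    (hv : (T w : ℕ) / 2 = (T u : ℕ) / 2) : (T u : ℕ) % 2 = 0 := by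
  by_contra hodd
  have hle : T u ≤ T w := hT.2.1 u w hc.symm (by omega)
  have hle' := Fin.le_def.mp hle
  have heq : T u = T w := Fin.ext (by omega)
  exact hT.2.2.1 u w hc.symm (by omega) (decide_eq_false hodd) heq

lemma supertab_odd_of_left {T : {p // p ∈ C} → Fin (n + n)}
    (hT : IsSuperTab C (fun r : Fin (n + n) => decide ((r : ℕ) % 2 = 0)) T)
    {u w : {p // p ∈ C}} (hc : w.1.1 = u.1.1) (hr : w.1.2 + 1 = u.1.2)
    (hv : (T w : ℕ) / 2 = (T u : ℕ) / 2) : (T u : ℕ) % 2 = 1 := by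
  by_contra hev
  have hev' : (T u : ℕ) % 2 = 0 := by omega
  have hle : T w ≤ T u := hT.1 w u hc (by omega)
  have hle' := Fin.le_def.mp hle
  have heq : T u = T w := Fin.ext (by omega)
  exact hT.2.2.2 u w hc.symm (by omega) (decide_eq_true hev') heq

lemma supertab_diag
    (hsq : ∀ i j : ℕ, (i, j) ∈ C → (i + 1, j + 1) ∈ C → (i, j + 1) ∈ C ∧ (i + 1, j) ∈ C)
    {T : {p // p ∈ C} → Fin (n + n)}
    (hT : IsSuperTab C (fun r : Fin (n + n) => decide ((r : ℕ) % 2 = 0)) T)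
    {u v : {p // p ∈ C}} (hr : u.1.1 + 1 = v.1.1) (hc : u.1.2 + 1 = v.1.2) :
    (T u : ℕ) / 2 < (T v : ℕ) / 2 := by
  have humem : (u.1.1, u.1.2) ∈ C := by rw [Prod.mk.eta]; exact u.2
  have hvmem : (u.1.1 + 1, u.1.2 + 1) ∈ C := by rw [hr, hc, Prod.mk.eta]; exact v.2
  obtain ⟨m1, m2⟩ := hsq u.1.1 u.1.2 humem hvmem
  let w1 : {p // p ∈ C} := ⟨(u.1.1, u.1.2 + 1), m1⟩
  let w2 : {p // p ∈ C} := ⟨(u.1.1 + 1, u.1.2), m2⟩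
  have e1 : w1.1.1 = u.1.1 := rfl
  have e2 : w1.1.2 = u.1.2 + 1 := rfl
  have e3 : w2.1.1 = u.1.1 + 1 := rfl
  have e4 : w2.1.2 = u.1.2 := rfl
  have q1 : (T u : ℕ) ≤ (T w1 : ℕ) := Fin.le_def.mp (hT.1 u w1 rfl (by omega))
  have q2 : (T w1 : ℕ) ≤ (T v : ℕ) := Fin.le_def.mp (hT.2.1 w1 v (by omega) (by omega))
  have q3 : (T u : ℕ) ≤ (T w2 : ℕ) := Fin.le_def.mp (hT.2.1 u w2 rfl (by omega))
  have q4 : (T w2 : ℕ) ≤ (T v : ℕ) := Fin.le_def.mp (hT.1 w2 v (by omega) (by omega))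
  by_contra hcon
  have hdiv : (T u : ℕ) / 2 = (T v : ℕ) / 2 := by omega
  by_cases hpar : (T u : ℕ) % 2 = 0
  · have hne1 : T u ≠ T w1 := hT.2.2.2 u w1 rfl (by omega) (decide_eq_true hpar)
    have hne1' : (T u : ℕ) ≠ (T w1 : ℕ) := fun h => hne1 (Fin.ext h)
    have hc1 : (T w1 : ℕ) = (T u : ℕ) + 1 := by omega
    have hne2 : T w1 ≠ T v := hT.2.2.1 w1 v (by omega) (by omega)
      (decide_eq_false (by omega))
    exact hne2 (Fin.ext (by omega))
  · have hne : T u ≠ T w2 := hT.2.2.1 u w2 rfl (by omega) (decide_eq_false hpar)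
    exact hne (Fin.ext (by omega))

lemma backward
    (hrow : ∀ p q : ℕ × ℕ, p ∈ C → q ∈ C → p.1 = q.1 → ∀ k, p.2 ≤ k → k ≤ q.2 → (p.1, k) ∈ C)
    (hcol : ∀ p q : ℕ × ℕ, p ∈ C → q ∈ C → p.2 = q.2 → ∀ k, p.1 ≤ k → k ≤ q.1 → (k, p.2) ∈ C)
    {S : {p // p ∈ C} → Fin n} {ε : {p // p ∈ C} → Bool}
    (hS : IsOYT C S) (hB : ∀ u, Bcell S u → ε u = false) (hL : ∀ u, Lcell S u → ε u = true) :
    IsSuperTab C (fun r : Fin (n + n) => decide ((r : ℕ) % 2 = 0))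
      (fun u => ⟨2 * (S u : ℕ) + (if ε u then 1 else 0),
        by have := (S u).isLt; split <;> omega⟩) := by
  have key_row : ∀ u v : {p // p ∈ C}, u.1.1 = v.1.1 → u.1.2 < v.1.2 → S u = S v →
      ε v = true := by
    intro u v h1 h2 h3
    have hwmem : (v.1.1, v.1.2 - 1) ∈ C := by
      have := hrow u.1 v.1 u.2 v.2 h1 (v.1.2 - 1) (by omega) (by omega)
      rwa [h1] at this
    set w : {p // p ∈ C} := ⟨(v.1.1, v.1.2 - 1), hwmem⟩ with hwdef
    have huw : S u ≤ S w := hS.1 u w (by simp only [hwdef]; omega) (by simp only [hwdef]; omega)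
    have hwv : S w ≤ S v := hS.1 w v rfl (by simp only [hwdef]; omega)
    have hw : S w = S v := le_antisymm hwv (h3 ▸ huw)
    exact hL v ⟨w, rfl, by simp only [hwdef]; omega, hw⟩
  have key_col : ∀ u v : {p // p ∈ C}, u.1.2 = v.1.2 → u.1.1 < v.1.1 → S u = S v →
      ε u = false := by
    intro u v h1 h2 h3
    have hwmem : (u.1.1 + 1, u.1.2) ∈ C :=
      hcol u.1 v.1 u.2 v.2 h1 (u.1.1 + 1) (by omega) (by omega)
    set w : {p // p ∈ C} := ⟨(u.1.1 + 1, u.1.2), hwmem⟩ with hwdef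
    have huw : S u ≤ S w := hS.2.1 u w rfl (by simp only [hwdef]; omega)
    have hwv : S w ≤ S v := hS.2.1 w v (by simp only [hwdef]; omega) (by simp only [hwdef]; omega)
    have hw : S w = S u := le_antisymm (h3 ▸ hwv) huw
    exact hB u ⟨w, rfl, rfl, hw⟩
  have hSle : ∀ u v : {p // p ∈ C}, S u ≤ S v → (S u : ℕ) ≤ (S v : ℕ) := fun _ _ h => h
  refine ⟨?_, ?_, ?_, ?_⟩
  · intro u v h1 h2
    rcases eq_or_lt_of_le h2 with he | hlt
    · have : u = v := Subtype.ext (Prod.ext h1 he)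
      rw [this]
    · have hSuv : (S u : ℕ) ≤ (S v : ℕ) := hSle u v (hS.1 u v h1 h2)
      rw [Fin.mk_le_mk]
      rcases Nat.lt_or_ge (S u : ℕ) (S v : ℕ) with hlt' | hge
      · have hu : (if ε u then 1 else 0) ≤ 1 := by split <;> omega
        omega
      · have heq : S u = S v := Fin.ext (by omega)
        have hveq := key_row u v h1 hlt heq
        have h5 : (if ε v then 1 else 0) = 1 := by rw [hveq]; simp
        have hu : (if ε u then 1 else 0) ≤ 1 := by split <;> omega
        omega
  · intro u v h1 h2
    rcases eq_or_lt_of_le h2 with he | hlt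
    · have : u = v := Subtype.ext (Prod.ext he h1)
      rw [this]
    · have hSuv : (S u : ℕ) ≤ (S v : ℕ) := hSle u v (hS.2.1 u v h1 h2)
      rw [Fin.mk_le_mk]
      rcases Nat.lt_or_ge (S u : ℕ) (S v : ℕ) with hlt' | hge
      · have hu : (if ε u then 1 else 0) ≤ 1 := by split <;> omega
        omega
      · have heq : S u = S v := Fin.ext (by omega)
        have hueq := key_col u v h1 hlt heq
        have h5 : (if ε u then 1 else 0) = 0 := by rw [hueq]; simp
        have hv : (if ε v then 1 else 0) ≤ 1 := by split <;> omega
        omega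
  · intro u v h1 h2 hpr heq
    rw [Fin.mk.injEq] at heq
    simp only [decide_eq_false_iff_not] at hpr
    have hεu : ε u = true := by
      cases h : ε u
      · exfalso
        apply hpr
        have h0 : (if ε u then 1 else 0) = 0 := by rw [h]; simp
        omega
      · rfl
    have h1' : (if ε u then 1 else 0) = 1 := by rw [hεu]; simp
    have hεv : ε v = true := by
      cases h : ε v
      · exfalso
        have h0 : (if ε v then 1 else 0) = 0 := by rw [h]; simp
        exact hpr (by omega)
      · rfl
    have h2' : (if ε v then 1 else 0) = 1 := by rw [hεv]; simp
    have hSeq : S u = S v := Fin.ext (by omega)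
    rcases Nat.lt_or_ge u.1.1 v.1.1 with hlt | hge
    · rw [key_col u v h1 hlt hSeq] at hεu; exact Bool.noConfusion hεu
    · have hlt' : v.1.1 < u.1.1 := by omega
      rw [key_col v u h1.symm hlt' hSeq.symm] at hεv; exact Bool.noConfusion hεv
  · intro u v h1 h2 hpr heq
    rw [Fin.mk.injEq] at heq
    simp only [decide_eq_true_eq] at hpr
    have hεu : ε u = false := by
      cases h : ε u
      · rfl
      · exfalso
        have h0 : (if ε u then 1 else 0) = 1 := by rw [h]; simp
        omega
    have h1' : (if ε u then 1 else 0) = 0 := by rw [hεu]; simp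
    have hεv : ε v = false := by
      cases h : ε v
      · rfl
      · exfalso
        have h0 : (if ε v then 1 else 0) = 1 := by rw [h]; simp
        omega
    have h2' : (if ε v then 1 else 0) = 0 := by rw [hεv]; simp
    have hSeq : S u = S v := Fin.ext (by omega)
    rcases Nat.lt_or_ge u.1.2 v.1.2 with hlt | hge
    · rw [key_row u v h1 hlt hSeq] at hεv; exact Bool.noConfusion hεv
    · have hlt' : v.1.2 < u.1.2 := by omega
      rw [key_row v u h1.symm hlt' hSeq.symm] at hεu; exact Bool.noConfusion hεu

open Classical in
lemma key
    (hrow : ∀ p q : ℕ × ℕ, p ∈ C → q ∈ C → p.1 = q.1 → ∀ k, p.2 ≤ k → k ≤ q.2 → (p.1, k) ∈ C)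
    (hcol : ∀ p q : ℕ × ℕ, p ∈ C → q ∈ C → p.2 = q.2 → ∀ k, p.1 ≤ k → k ≤ q.1 → (k, p.2) ∈ C)
    (hsq : ∀ i j : ℕ, (i, j) ∈ C → (i + 1, j + 1) ∈ C → (i, j + 1) ∈ C ∧ (i + 1, j) ∈ C)
    (F : Fin n → ℤ → A) (t : A) :
    tabSum C (fun r : Fin (n + n) => decide ((r : ℕ) % 2 = 0))
        (wNinth (fun r : Fin (n + n) => decide ((r : ℕ) % 2 = 0))
          (fun k c => (1 - t) * F k c) (fun k c => t * F k c)) =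
      bacSum C F t := by
  classical
  have step1 : bacSum C F t
      = ∑ S ∈ Finset.univ.filter (fun S : {p // p ∈ C} → Fin n => IsOYT C S),
          ∑ ε ∈ Fintype.piFinset (alwSet S),
            ∏ u : {p // p ∈ C}, (if ε u then (1 - t) else t) * F (S u) (content u.1) := by
    unfold bacSum
    refine Finset.sum_congr rfl fun S hS => ?_
    have hOYT : IsOYT C S := (Finset.mem_filter.mp hS).2
    have e1 : (∏ u : {p // p ∈ C}, ∑ b ∈ alwSet S u, (if b then (1 - t) else t))
        = t ^ vertPairs C S * (1 - t) ^ horizPairs C S := by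
      rw [Finset.prod_congr rfl fun u _ => sum_alwSet t S u]
      exact prod_alwSet hOYT t
    rw [← e1, Finset.prod_univ_sum, Finset.sum_mul]
    refine Finset.sum_congr rfl fun ε hε => ?_
    rw [← Finset.prod_mul_distrib]
  rw [step1]
  unfold tabSum
  rw [Finset.sum_sigma']
  refine Finset.sum_bij'
    (fun T _ => (⟨fun u => ⟨(T u : ℕ) / 2, by have := (T u).isLt; omega⟩,
        fun u => decide ((T u : ℕ) % 2 = 1)⟩ :
      Σ S : {p // p ∈ C} → Fin n, ({p // p ∈ C} → Bool)))
    (fun p _ => fun u => (⟨2 * (p.1 u : ℕ) + (if p.2 u then 1 else 0),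
        by have := (p.1 u).isLt; split <;> omega⟩ : Fin (n + n)))
    ?_ ?_ ?_ ?_ ?_
  · intro T hT
    have hTab : IsSuperTab C (fun r : Fin (n + n) => decide ((r : ℕ) % 2 = 0)) T :=
      (Finset.mem_filter.mp hT).2
    rw [Finset.mem_sigma]
    constructor
    · rw [Finset.mem_filter]
      refine ⟨Finset.mem_univ _, ?_, ?_, ?_⟩
      · intro u v h1 h2
        exact Fin.mk_le_mk.mpr (Nat.div_le_div_right (Fin.le_def.mp (hTab.1 u v h1 h2)))
      · intro u v h1 h2
        exact Fin.mk_le_mk.mpr (Nat.div_le_div_right (Fin.le_def.mp (hTab.2.1 u v h1 h2)))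
      · intro u v h1 h2
        exact Fin.mk_lt_mk.mpr (supertab_diag hsq hTab h1 h2)
    · rw [Fintype.mem_piFinset]
      intro u
      unfold alwSet
      split_ifs with hB hL
      · obtain ⟨w, hw1, hw2, hw3⟩ := hB
        have hdiv : (T w : ℕ) / 2 = (T u : ℕ) / 2 := by
          have := congrArg Fin.val hw3
          simpa using this
        have hmod := supertab_even_of_below hTab hw1 hw2 hdiv
        simp [hmod]
      · obtain ⟨w, hw1, hw2, hw3⟩ := hL
        have hdiv : (T w : ℕ) / 2 = (T u : ℕ) / 2 := by
          have := congrArg Fin.val hw3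
          simpa using this
        have hmod := supertab_odd_of_left hTab hw1 hw2 hdiv
        simp [hmod]
      · exact Finset.mem_univ _
  · intro p hp
    rw [Finset.mem_sigma] at hp
    obtain ⟨hp1, hp2⟩ := hp
    have hOYT : IsOYT C p.1 := (Finset.mem_filter.mp hp1).2
    rw [Fintype.mem_piFinset] at hp2
    have hB : ∀ u, Bcell p.1 u → p.2 u = false := by
      intro u hBu
      have h := hp2 u
      unfold alwSet at h
      rw [if_pos hBu] at h
      simpa using h
    have hL : ∀ u, Lcell p.1 u → p.2 u = true := by
      intro u hLu
      have hnB : ¬ Bcell p.1 u := fun hBu => not_L_and_B hOYT u ⟨hLu, hBu⟩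
      have h := hp2 u
      unfold alwSet at h
      rw [if_neg hnB, if_pos hLu] at h
      simpa using h
    rw [Finset.mem_filter]
    exact ⟨Finset.mem_univ _, backward hrow hcol hOYT hB hL⟩
  · intro T hT
    funext u
    apply Fin.ext
    show 2 * ((T u : ℕ) / 2) + (if decide ((T u : ℕ) % 2 = 1) then 1 else 0) = (T u : ℕ)
    by_cases h : (T u : ℕ) % 2 = 1 <;> simp [h] <;> omega
  · intro p hp
    obtain ⟨S, ε⟩ := p
    apply Sigma.ext
    · funext u
      apply Fin.ext
      show (2 * (S u : ℕ) + (if ε u then 1 else 0)) / 2 = (S u : ℕ)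
      split <;> omega
    · apply heq_of_eq
      funext u
      show decide ((2 * (S u : ℕ) + (if ε u then 1 else 0)) % 2 = 1) = ε u
      cases h : ε u <;> simp [h] <;> omega
  · intro T hT
    refine Finset.prod_congr rfl fun u _ => ?_
    rw [wNinth_alt]
    have hmod : (T u : ℕ) % 2 = 0 ∨ (T u : ℕ) % 2 = 1 := by omega
    show (if (T u : ℕ) % 2 = 0 then t else 1 - t)
        * F ⟨(T u : ℕ) / 2, by have := (T u).isLt; omega⟩ (content u.1)
      = (if decide ((T u : ℕ) % 2 = 1) then 1 - t else t)
        * F ⟨(T u : ℕ) / 2, by have := (T u).isLt; omega⟩ (content u.1)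
    congr 1
    rcases hmod with h | h <;> simp [h]

end Key

/-- **Identification with Bachmann's ordered-Young-tableaux Schur functions**
(equation (40)): for `m = n` and the alternating marked alphabet
`1′ < 2 < 3′ < 4 < ⋯ < (2n−1)′ < 2n` (odd letters primed, even letters unprimed),
setting `x_{k,c} = (1−t) f_{k,c}` and `y_{k,c} = t f_{k,c}` gives
`s^{R′}_{λ/μ}(X,Y) = s^{Bac}_{λ/μ}(F;t)`. -/
theorem bachmann_identification (n : ℕ) (lam mu : List ℕ) (hlam : IsPartition lam)
    (hmu : IsPartition mu) (hsub : Contained mu lam)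
    (F : Fin n → ℤ → A) (t : A) :
    tabSum (cells lam mu) (fun r : Fin (n + n) => decide ((r : ℕ) % 2 = 0))
        (wNinth (fun r : Fin (n + n) => decide ((r : ℕ) % 2 = 0))
          (fun k c => (1 - t) * F k c) (fun k c => t * F k c)) =
      bacSum (cells lam mu) F t := by
  refine key ?_ ?_ ?_ F t
  · rintro ⟨i, j⟩ ⟨i', j'⟩ hp hq h k h1 h2
    dsimp only at h h1 h2 ⊢
    subst h
    exact cells_row hp hq h1 h2
  · rintro ⟨i, j⟩ ⟨i', j'⟩ hp hq h k h1 h2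
    dsimp only at h h1 h2 ⊢
    subst h
    exact cells_col hlam.1 hmu.1 hp hq h1 h2
  · intro i j h1 h2
    exact cells_square hlam.1 hmu.1 h1 h2

end SuperSchur
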